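/- Let (Ω, ℱ, ℙ, S) be a measure-preserving system on a probability space and suppose that for every F ∈ L¹(ℙ) and every strictly increasing sequence (n_k) of integers, (1/n)·Σ_{k=1}^{n} F ∘ S^{n_k} converges in L¹(ℙ) to E[F]. Then for all A, B ∈ ℱ, ℙ(A ∩ S^{−n}B) → ℙ(A)·ℙ(B) as n → ∞ (i.e., S is mixing). -/

import Mathlib

open MeasureTheory Filter

theorem mixing_of_blum_hanson {Ω : Type*} [MeasurableSpace Ω]
    (ℙ : Measure Ω) [IsProbabilityMeasure ℙ] (S : Ω → Ω)
    (hS : MeasurePreserving S ℙ ℙ)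
    (hBH : ∀ F : Ω → ℝ, Integrable F ℙ → ∀ n : ℕ → ℕ, StrictMono n →
      Tendsto (fun m : ℕ =>
          ∫ ω, |(m : ℝ)⁻¹ * (∑ k ∈ Finset.range m, F (S^[n k] ω)) - ∫ ω', F ω' ∂ℙ| ∂ℙ)
        atTop (nhds 0)) :
    ∀ A B : Set Ω, MeasurableSet A → MeasurableSet B →
      Tendsto (fun n : ℕ => (ℙ (A ∩ S^[n] ⁻¹' B)).toReal) atTop
        (nhds ((ℙ A).toReal * (ℙ B).toReal)) := by
  intro A B hA hB
  set L : ℝ := (ℙ A).toReal * (ℙ B).toReal with hLdef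
  set a : ℕ → ℝ := fun n => (ℙ (A ∩ S^[n] ⁻¹' B)).toReal with hadef
  -- Cesàro averages along any strictly increasing subsequence converge to L
  have key : ∀ n : ℕ → ℕ, StrictMono n →
      Tendsto (fun m : ℕ => (m : ℝ)⁻¹ * ∑ k ∈ Finset.range m, a (n k)) atTop (nhds L) := by
    intro n hn
    set F : Ω → ℝ := B.indicator (fun _ => (1:ℝ)) with hFdef
    have hFint : Integrable F ℙ := (integrable_const 1).indicator hB
    have hFc : ∫ ω, F ω ∂ℙ = (ℙ B).toReal := by
      rw [hFdef, integral_indicator_const _ hB]; simp; rfl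
    have hmeas : ∀ j : ℕ, MeasurableSet (S^[j] ⁻¹' B) := fun j =>
      (hS.measurable.iterate j) hB
    have hcomp : ∀ j : ℕ, ∀ ω, F (S^[j] ω) = (S^[j] ⁻¹' B).indicator (fun _ => (1:ℝ)) ω := by
      intro j ω
      rfl
    have hint_each : ∀ j : ℕ, Integrable (fun ω => F (S^[j] ω)) ℙ := by
      intro j
      have : (fun ω => F (S^[j] ω)) = (S^[j] ⁻¹' B).indicator (fun _ => (1:ℝ)) := by
        funext ω; exact hcomp j ω
      rw [this]; exact (integrable_const 1).indicator (hmeas j)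
    have hAint : ∀ j : ℕ, ∫ ω in A, F (S^[j] ω) ∂ℙ = a j := by
      intro j
      simp_rw [hcomp j]
      rw [setIntegral_indicator (hmeas j)]
      simp [hadef]; rfl
    have hBH' := hBH F hFint n hn
    rw [tendsto_iff_dist_tendsto_zero]
    refine squeeze_zero (fun m => dist_nonneg)
      (g := fun m : ℕ => ∫ ω, |(m:ℝ)⁻¹ * (∑ k ∈ Finset.range m, F (S^[n k] ω)) - ∫ ω', F ω' ∂ℙ| ∂ℙ)
      ?_ hBH'
    intro m
    have hsum_int : Integrable (fun ω => ∑ k ∈ Finset.range m, F (S^[n k] ω)) ℙ :=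
      integrable_finset_sum _ (fun k _ => hint_each (n k))
    have hg_int : Integrable
        (fun ω => (m:ℝ)⁻¹ * (∑ k ∈ Finset.range m, F (S^[n k] ω)) - ∫ ω', F ω' ∂ℙ) ℙ :=
      (hsum_int.const_mul _).sub (integrable_const _)
    have h1 : (m:ℝ)⁻¹ * ∑ k ∈ Finset.range m, a (n k) - L
        = ∫ ω in A, ((m:ℝ)⁻¹ * (∑ k ∈ Finset.range m, F (S^[n k] ω)) - ∫ ω', F ω' ∂ℙ) ∂ℙ := by
      rw [integral_sub ((hsum_int.const_mul _).integrableOn) (integrable_const _).integrableOn]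
      rw [integral_const_mul, integral_finset_sum _ (fun k _ => (hint_each (n k)).integrableOn)]
      simp_rw [hAint]
      rw [integral_const, hFc]
      simp [hLdef, Measure.restrict_apply_univ, mul_comm, measureReal_def]
    rw [Real.dist_eq, h1]
    calc |∫ ω in A, ((m:ℝ)⁻¹ * (∑ k ∈ Finset.range m, F (S^[n k] ω)) - ∫ ω', F ω' ∂ℙ) ∂ℙ|
        ≤ ∫ ω in A, |(m:ℝ)⁻¹ * (∑ k ∈ Finset.range m, F (S^[n k] ω)) - ∫ ω', F ω' ∂ℙ| ∂ℙ :=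
          by
            have h := norm_integral_le_integral_norm (μ := ℙ.restrict A)
              (f := fun ω => (m:ℝ)⁻¹ * (∑ k ∈ Finset.range m, F (S^[n k] ω)) - ∫ ω', F ω' ∂ℙ)
            simpa [Real.norm_eq_abs] using h
      _ ≤ ∫ ω, |(m:ℝ)⁻¹ * (∑ k ∈ Finset.range m, F (S^[n k] ω)) - ∫ ω', F ω' ∂ℙ| ∂ℙ :=
          setIntegral_le_integral hg_int.abs (Eventually.of_forall fun ω => abs_nonneg _)
  -- Boundedness of a
  have habd : ∀ n, a n ∈ Set.Icc (0:ℝ) 1 := by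
    intro n
    constructor
    · exact ENNReal.toReal_nonneg
    · have h1 : ℙ (A ∩ S^[n] ⁻¹' B) ≤ 1 := prob_le_one
      calc a n ≤ (1 : ENNReal).toReal := ENNReal.toReal_mono ENNReal.one_ne_top h1
        _ = 1 := by simp
  -- Contradiction argument
  by_contra hcon
  rw [Metric.tendsto_atTop] at hcon
  push_neg at hcon
  obtain ⟨ε, hε, hfreq⟩ := hcon
  obtain ⟨φ, hφ, hφdist⟩ := Filter.extraction_of_frequently_atTop
    (Filter.frequently_atTop.2 fun N => by
      obtain ⟨n, hn, hd⟩ := hfreq N; exact ⟨n, hn, hd⟩)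
  obtain ⟨L', hL'mem, ψ, hψ, hconv⟩ := isCompact_Icc.tendsto_subseq (fun k => habd (φ k))
  have hces1 : Tendsto (fun m : ℕ => (m : ℝ)⁻¹ * ∑ k ∈ Finset.range m, a (φ (ψ k)))
      atTop (nhds L') := by
    have := hconv.cesaro
    simpa [Function.comp] using this
  have hces2 := key (φ ∘ ψ) (hφ.comp hψ)
  have hLL' : L' = L := tendsto_nhds_unique hces1 (by simpa [Function.comp] using hces2)
  have hdist : ε ≤ dist L' L := by
    have : Tendsto (fun k => dist (a (φ (ψ k))) L) atTop (nhds (dist L' L)) :=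
      (Continuous.dist continuous_id continuous_const).continuousAt.tendsto.comp hconv
    exact le_of_tendsto_of_tendsto' tendsto_const_nhds this (fun k => hφdist (ψ k))
  rw [hLL'] at hdist
  simp at hdist
  linarith
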